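/- Let p be a prime and β ≥ 1 an integer. Let h₁ = (a,b;c,d) and h₂ = (a′,b′;c′,d′) be elements of GL₂(ℚ_p) with det h₁ = det h₂. Then γ̂⁻¹·ι(h₁,h₂)·γ̂ lies in GL₄(ℤ_p) and is upper triangular modulo p^β (i.e. its entries at positions (2,1), (3,1), (3,2), (4,1), (4,2), (4,3) lie in p^β·ℤ_p) if and only if h₁, h₂ ∈ GL₂(ℤ_p) and c ≡ 0, c′ ≡ 0, a ≡ a′, d ≡ d′, b′ ≡ −b (mod p^β·ℤ_p). -/

import Mathlib

open Matrix

set_option maxHeartbeats 2000000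

noncomputable section

/-- The Weyl representative `w₁`. -/
def w1 (R : Type*) [CommRing R] : Matrix (Fin 4) (Fin 4) R :=
  !![1, 0, 0, 0;
     0, 0, 1, 0;
     0, -1, 0, 0;
     0, 0, 0, 1]

/-- The matrix `γ`. -/
def gammaMat (R : Type*) [CommRing R] : Matrix (Fin 4) (Fin 4) R :=
  !![1, 0, 0, 0;
     1, 1, 0, 0;
     0, 0, 1, 0;
     0, 0, -1, 1]

/-- The matrix `γ̂ = γ·w₁`. -/
def gammaHat (R : Type*) [CommRing R] : Matrix (Fin 4) (Fin 4) R :=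
  gammaMat R * w1 R

/-- The embedding `ι` of a pair of 2×2 matrices (with equal determinant) into 4×4 matrices. -/
def iotaMat {K : Type*} [CommRing K] (h₁ h₂ : Matrix (Fin 2) (Fin 2) K) :
    Matrix (Fin 4) (Fin 4) K :=
  !![h₁ 0 0, 0, 0, h₁ 0 1;
     0, h₂ 0 0, h₂ 0 1, 0;
     0, h₂ 1 0, h₂ 1 1, 0;
     h₁ 1 0, 0, 0, h₁ 1 1]

/-- Membership in `GL_n(ℤ_p)` for a matrix over `ℚ_p`: integral entries and unit determinant. -/
def InGLZp {p : ℕ} [Fact p.Prime] {n : ℕ} (g : Matrix (Fin n) (Fin n) ℚ_[p]) : Prop :=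
  (∀ i j, ‖g i j‖ ≤ 1) ∧ ‖g.det‖ = 1

lemma gammaHat_inv (K : Type*) [Field K] :
    (gammaHat K)⁻¹ = !![1,0,0,0; 0,0,-1,0; -1,1,0,0; 0,0,1,1] := by
  apply Matrix.inv_eq_right_inv
  ext i j
  fin_cases i <;> fin_cases j <;>
    simp [gammaHat, gammaMat, w1, Matrix.mul_apply, Fin.sum_univ_four]

lemma conj_eq {K : Type*} [Field K] (h₁ h₂ : Matrix (Fin 2) (Fin 2) K) :
    (gammaHat K)⁻¹ * iotaMat h₁ h₂ * gammaHat K =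
    !![h₁ 0 0, h₁ 0 1, 0, h₁ 0 1;
       -h₂ 1 0, h₂ 1 1, -h₂ 1 0, 0;
       h₂ 0 0 - h₁ 0 0, -h₂ 0 1 - h₁ 0 1, h₂ 0 0, -h₁ 0 1;
       h₁ 1 0 + h₂ 1 0, h₁ 1 1 - h₂ 1 1, h₂ 1 0, h₁ 1 1] := by
  rw [gammaHat_inv]
  ext i j
  fin_cases i <;> fin_cases j <;>
    (simp [gammaHat, gammaMat, w1, iotaMat, Matrix.mul_apply, Fin.sum_univ_four,
      Matrix.vecHead, Matrix.vecTail]; try ring)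

lemma conj_det {K : Type*} [Field K] (h₁ h₂ : Matrix (Fin 2) (Fin 2) K) :
    ((gammaHat K)⁻¹ * iotaMat h₁ h₂ * gammaHat K).det = h₁.det * h₂.det := by
  rw [conj_eq, Matrix.det_fin_two, Matrix.det_fin_two, Matrix.det_succ_row_zero]
  simp [Fin.sum_univ_succ, Matrix.det_fin_three, Matrix.submatrix_apply]
  simp [Fin.succAbove, Fin.lt_def]
  ring

variable {p : ℕ} [Fact p.Prime]

lemma padd (x y : ℚ_[p]) {t : ℝ} (hx : ‖x‖ ≤ t) (hy : ‖y‖ ≤ t) : ‖x + y‖ ≤ t :=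
  le_trans (Padic.nonarchimedean x y) (max_le hx hy)

lemma psub (x y : ℚ_[p]) {t : ℝ} (hx : ‖x‖ ≤ t) (hy : ‖y‖ ≤ t) : ‖x - y‖ ≤ t := by
  rw [sub_eq_add_neg]; exact padd x (-y) hx (by rwa [norm_neg])

theorem stmt8 (p : ℕ) [Fact p.Prime] (β : ℕ) (hβ : 1 ≤ β)
    (h₁ h₂ : Matrix (Fin 2) (Fin 2) ℚ_[p])
    (hu₁ : IsUnit h₁.det) (hu₂ : IsUnit h₂.det) (hdet : h₁.det = h₂.det) :
    (InGLZp ((gammaHat ℚ_[p])⁻¹ * iotaMat h₁ h₂ * gammaHat ℚ_[p]) ∧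
      (‖((gammaHat ℚ_[p])⁻¹ * iotaMat h₁ h₂ * gammaHat ℚ_[p]) 1 0‖ ≤ (p : ℝ) ^ (-(β : ℤ)) ∧
       ‖((gammaHat ℚ_[p])⁻¹ * iotaMat h₁ h₂ * gammaHat ℚ_[p]) 2 0‖ ≤ (p : ℝ) ^ (-(β : ℤ)) ∧
       ‖((gammaHat ℚ_[p])⁻¹ * iotaMat h₁ h₂ * gammaHat ℚ_[p]) 2 1‖ ≤ (p : ℝ) ^ (-(β : ℤ)) ∧
       ‖((gammaHat ℚ_[p])⁻¹ * iotaMat h₁ h₂ * gammaHat ℚ_[p]) 3 0‖ ≤ (p : ℝ) ^ (-(β : ℤ)) ∧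
       ‖((gammaHat ℚ_[p])⁻¹ * iotaMat h₁ h₂ * gammaHat ℚ_[p]) 3 1‖ ≤ (p : ℝ) ^ (-(β : ℤ)) ∧
       ‖((gammaHat ℚ_[p])⁻¹ * iotaMat h₁ h₂ * gammaHat ℚ_[p]) 3 2‖ ≤ (p : ℝ) ^ (-(β : ℤ))))
    ↔
    (InGLZp h₁ ∧ InGLZp h₂ ∧
      ‖h₁ 1 0‖ ≤ (p : ℝ) ^ (-(β : ℤ)) ∧
      ‖h₂ 1 0‖ ≤ (p : ℝ) ^ (-(β : ℤ)) ∧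
      ‖h₁ 0 0 - h₂ 0 0‖ ≤ (p : ℝ) ^ (-(β : ℤ)) ∧
      ‖h₁ 1 1 - h₂ 1 1‖ ≤ (p : ℝ) ^ (-(β : ℤ)) ∧
      ‖h₂ 0 1 + h₁ 0 1‖ ≤ (p : ℝ) ^ (-(β : ℤ))) := by
  have hdetnorm : ‖((gammaHat ℚ_[p])⁻¹ * iotaMat h₁ h₂ * gammaHat ℚ_[p]).det‖
      = ‖h₁.det‖ * ‖h₂.det‖ := by rw [conj_det]; exact norm_mul _ _
  have hdetiff : ‖((gammaHat ℚ_[p])⁻¹ * iotaMat h₁ h₂ * gammaHat ℚ_[p]).det‖ = 1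
      ↔ (‖h₁.det‖ = 1 ∧ ‖h₂.det‖ = 1) := by
    rw [hdetnorm, hdet]
    constructor
    · intro h
      have h2 : ‖h₂.det‖ = 1 := by
        nlinarith [norm_nonneg h₂.det]
      exact ⟨h2, h2⟩
    · rintro ⟨h1, h2⟩; rw [h2]; norm_num
  unfold InGLZp
  rw [hdetiff, conj_eq]
  simp only [Fin.isValue, Matrix.of_apply, Matrix.cons_val', Matrix.cons_val_zero,
    Matrix.cons_val_one, Matrix.head_cons, Matrix.empty_val', Matrix.cons_val_fin_one,
    Matrix.head_fin_const, Matrix.cons_val_two, Matrix.cons_val_three, Matrix.tail_cons]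
  constructor
  · rintro ⟨⟨hint, hd1, hd2⟩, n10, n20, n21, n30, n31, n32⟩
    have e00 := hint 0 0
    have e01 := hint 0 1
    have e11 := hint 1 1
    have e12 := hint 1 2
    have e20 := hint 2 0
    have e21 := hint 2 1
    have e22 := hint 2 2
    have e30 := hint 3 0
    have e31 := hint 3 1
    have e32 := hint 3 2
    have e33 := hint 3 3
    simp only [Matrix.cons_val', Matrix.cons_val_zero, Matrix.cons_val_one, Matrix.head_cons,
      Matrix.empty_val', Matrix.cons_val_fin_one, Matrix.head_fin_const,
      Matrix.cons_val_two, Matrix.cons_val_three, Matrix.tail_cons, Fin.isValue,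
      Matrix.of_apply] at e00 e01 e11 e12 e20 e21 e22 e30 e31 e32 e33
    rw [norm_neg] at e12
    have hb : ‖h₂ 0 1‖ ≤ 1 := by
      have : h₂ 0 1 = -(-h₂ 0 1 - h₁ 0 1) - h₁ 0 1 := by ring
      rw [this]; exact psub _ _ (by rwa [norm_neg]) e01
    have hc : ‖h₁ 1 0‖ ≤ 1 := by
      have : h₁ 1 0 = (h₁ 1 0 + h₂ 1 0) - h₂ 1 0 := by ring
      rw [this]; exact psub _ _ e30 e32
    have hcβ : ‖h₁ 1 0‖ ≤ (p : ℝ) ^ (-(β : ℤ)) := by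
      have : h₁ 1 0 = (h₁ 1 0 + h₂ 1 0) - h₂ 1 0 := by ring
      rw [this]; exact psub _ _ n30 (by rwa [norm_neg] at n10)
    refine ⟨⟨?_, hd1⟩, ⟨?_, hd2⟩, hcβ, by rwa [norm_neg] at n10, ?_, ?_, ?_⟩
    · intro i j; fin_cases i <;> fin_cases j
      · exact e00
      · exact e01
      · exact hc
      · exact e33
    · intro i j; fin_cases i <;> fin_cases j
      · exact e22
      · exact hb
      · exact e12
      · exact e11
    · rw [norm_sub_rev]; exact n20
    · exact n31
    · rwa [show -h₂ 0 1 - h₁ 0 1 = -(h₂ 0 1 + h₁ 0 1) by ring, norm_neg] at n21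
  · rintro ⟨⟨hint1, hd1⟩, ⟨hint2, hd2⟩, bc, bC, baa, bdd, bbb⟩
    have hq1 : ((p : ℝ)) ^ (-(β : ℤ)) ≤ 1 := by
      apply zpow_le_one_of_nonpos₀
      · exact_mod_cast (Fact.out : p.Prime).one_le
      · omega
    refine ⟨⟨?_, hd1, hd2⟩, ?_, ?_, ?_, ?_, ?_, ?_⟩
    · intro i j; fin_cases i <;> fin_cases j
      · exact hint1 0 0
      · exact hint1 0 1
      · show ‖(0 : ℚ_[p])‖ ≤ 1; simp
      · exact hint1 0 1
      · show ‖-h₂ 1 0‖ ≤ 1; rw [norm_neg]; exact hint2 1 0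
      · exact hint2 1 1
      · show ‖-h₂ 1 0‖ ≤ 1; rw [norm_neg]; exact hint2 1 0
      · show ‖(0 : ℚ_[p])‖ ≤ 1; simp
      · exact psub _ _ (hint2 0 0) (hint1 0 0)
      · show ‖-h₂ 0 1 - h₁ 0 1‖ ≤ 1
        exact psub _ _ (by rw [norm_neg]; exact hint2 0 1) (hint1 0 1)
      · exact hint2 0 0
      · show ‖-h₁ 0 1‖ ≤ 1; rw [norm_neg]; exact hint1 0 1
      · exact padd _ _ (hint1 1 0) (hint2 1 0)
      · exact psub _ _ (hint1 1 1) (hint2 1 1)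
      · exact hint2 1 0
      · exact hint1 1 1
    · rwa [norm_neg]
    · rw [norm_sub_rev]; exact baa
    · rwa [show -h₂ 0 1 - h₁ 0 1 = -(h₂ 0 1 + h₁ 0 1) by ring, norm_neg]
    · exact padd _ _ bc bC
    · exact bdd
    · exact bC
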